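/- Let u, v be unit vectors in ℝⁿ with ⟨u,v⟩ ≥ 0 and 0 < α ≤ 1. Then there exists a unit vector w₀ such that every unit vector w with angle(w, w₀) ≤ α/12 satisfies: (a) angle(u, w) ∈ [α/3, α/2], and (b) ⟨w, v⟩ ≥ sin(α/3). -/

import Mathlib

open scoped RealInnerProductSpace

private theorem key_inner {E : Type*} [NormedAddCommGroup E] [InnerProductSpace ℝ E]
    (x y z : E) (hx : ‖x‖ = 1) (hy : ‖y‖ = 1) (hz : ‖z‖ = 1) :
    |⟪x, z⟫ - ⟪x, y⟫ * ⟪y, z⟫| ≤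
      Real.sqrt (1 - ⟪x, y⟫ ^ 2) * Real.sqrt (1 - ⟪y, z⟫ ^ 2) := by
  have hyy : ⟪y, y⟫ = 1 := by
    rw [real_inner_self_eq_norm_sq, hy]; norm_num
  have hinner : ⟪x - ⟪x, y⟫ • y, z - ⟪y, z⟫ • y⟫ = ⟪x, z⟫ - ⟪x, y⟫ * ⟪y, z⟫ := by
    rw [inner_sub_left, inner_sub_right, inner_sub_right, real_inner_smul_left,
      real_inner_smul_left, real_inner_smul_right, real_inner_smul_right, hyy]
    ring
  have hn1 : ‖x - ⟪x, y⟫ • y‖ = Real.sqrt (1 - ⟪x, y⟫ ^ 2) := by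
    rw [← Real.sqrt_sq (norm_nonneg (x - ⟪x, y⟫ • y))]
    congr 1
    rw [← real_inner_self_eq_norm_sq, inner_sub_left, inner_sub_right, inner_sub_right,
      real_inner_smul_left, real_inner_smul_left, real_inner_smul_right,
      real_inner_smul_right, hyy, real_inner_comm y x,
      real_inner_self_eq_norm_sq, hx]
    ring
  have hn2 : ‖z - ⟪y, z⟫ • y‖ = Real.sqrt (1 - ⟪y, z⟫ ^ 2) := by
    rw [← Real.sqrt_sq (norm_nonneg (z - ⟪y, z⟫ • y))]
    congr 1
    rw [← real_inner_self_eq_norm_sq, inner_sub_left, inner_sub_right, inner_sub_right,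
      real_inner_smul_left, real_inner_smul_left, real_inner_smul_right,
      real_inner_smul_right, hyy, real_inner_comm y z,
      real_inner_self_eq_norm_sq, hz]
    ring
  calc |⟪x, z⟫ - ⟪x, y⟫ * ⟪y, z⟫| = |⟪x - ⟪x, y⟫ • y, z - ⟪y, z⟫ • y⟫| := by rw [hinner]
    _ ≤ ‖x - ⟪x, y⟫ • y‖ * ‖z - ⟪y, z⟫ • y‖ := abs_real_inner_le_norm _ _
    _ = _ := by rw [hn1, hn2]

private theorem arccos_le_arccos' {x y : ℝ} (h : x ≤ y) :
    Real.arccos y ≤ Real.arccos x := by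
  unfold Real.arccos
  have := Real.monotone_arcsin h
  linarith

private theorem exists_e {n : ℕ} (hn : 2 ≤ n) (u v : EuclideanSpace ℝ (Fin n))
    (hu : ‖u‖ = 1) (hv : ‖v‖ = 1) (huv : 0 ≤ ⟪u, v⟫) :
    ∃ e : EuclideanSpace ℝ (Fin n), ‖e‖ = 1 ∧ ⟪u, e⟫ = 0 ∧
      ⟪v, e⟫ = Real.sqrt (1 - ⟪u, v⟫ ^ 2) := by
  have huu : ⟪u, u⟫ = 1 := by rw [real_inner_self_eq_norm_sq, hu]; norm_num
  have hvv : ⟪v, v⟫ = 1 := by rw [real_inner_self_eq_norm_sq, hv]; norm_num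
  by_cases hd : v - ⟪u, v⟫ • u = 0
  · have hveq : v = ⟪u, v⟫ • u := by rwa [sub_eq_zero] at hd
    have hc2 : ⟪u, v⟫ ^ 2 = 1 := by
      have := hvv
      rw [hveq, real_inner_smul_left, real_inner_smul_right, huu] at this
      nlinarith
    have hc1 : ⟪u, v⟫ = 1 := by nlinarith
    have hu0 : u ≠ 0 := by intro h; rw [h, norm_zero] at hu; norm_num at hu
    have hfr : 0 < Module.finrank ℝ ((ℝ ∙ u)ᗮ : Submodule ℝ (EuclideanSpace ℝ (Fin n))) := by
      have h1 : Module.finrank ℝ (ℝ ∙ u : Submodule ℝ (EuclideanSpace ℝ (Fin n))) = 1 :=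
        finrank_span_singleton hu0
      have h2 := Submodule.finrank_add_finrank_orthogonal
        (K := (ℝ ∙ u : Submodule ℝ (EuclideanSpace ℝ (Fin n))))
      rw [h1, finrank_euclideanSpace_fin] at h2
      omega
    obtain ⟨x, hxmem, hx0⟩ : ∃ x ∈ (ℝ ∙ u)ᗮ, x ≠ 0 := by
      by_contra h
      push_neg at h
      have : ((ℝ ∙ u)ᗮ : Submodule ℝ (EuclideanSpace ℝ (Fin n))) = ⊥ := by
        rw [Submodule.eq_bot_iff]; exact h
      rw [this] at hfr; simp at hfr
    refine ⟨‖x‖⁻¹ • x, ?_, ?_, ?_⟩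
    · rw [norm_smul, norm_inv, norm_norm, inv_mul_cancel₀ (norm_ne_zero_iff.mpr hx0)]
    · rw [real_inner_smul_right,
        (Submodule.mem_orthogonal _ _).mp hxmem u (Submodule.mem_span_singleton_self u)]
      ring
    · rw [hc2]
      simp only [sub_self, Real.sqrt_zero]
      rw [hveq, hc1, one_smul, real_inner_smul_right,
        (Submodule.mem_orthogonal _ _).mp hxmem u (Submodule.mem_span_singleton_self u)]
      ring
  · set d := v - ⟪u, v⟫ • u with hdd
    have hud : ⟪u, d⟫ = 0 := by
      rw [hdd, inner_sub_right, real_inner_smul_right, huu]; ring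
    have hvd : ⟪v, d⟫ = 1 - ⟪u, v⟫ ^ 2 := by
      rw [hdd, inner_sub_right, real_inner_smul_right, hvv, real_inner_comm v u]; ring
    have hnd : ‖d‖ = Real.sqrt (1 - ⟪u, v⟫ ^ 2) := by
      rw [← Real.sqrt_sq (norm_nonneg d)]
      congr 1
      rw [← real_inner_self_eq_norm_sq, hdd, inner_sub_left, hvd, real_inner_comm v u]
      rw [real_inner_smul_left, inner_sub_right, real_inner_smul_right, huu,
        real_inner_comm v u]
      ring
    have hnd0 : ‖d‖ ≠ 0 := norm_ne_zero_iff.mpr hd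
    refine ⟨‖d‖⁻¹ • d, ?_, ?_, ?_⟩
    · rw [norm_smul, norm_inv, norm_norm, inv_mul_cancel₀ hnd0]
    · rw [real_inner_smul_right, hud]; ring
    · rw [real_inner_smul_right, hvd, ← hnd]
      have : ‖d‖ ^ 2 = 1 - ⟪u, v⟫ ^ 2 := by
        rw [hnd, Real.sq_sqrt]
        have hcs : |⟪u, v⟫| ≤ 1 := by
          have := abs_real_inner_le_norm u v
          rwa [hu, hv, one_mul] at this
        nlinarith [sq_abs ⟪u, v⟫, abs_nonneg ⟪u, v⟫]
      rw [← this]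
      field_simp

theorem stmt_11 {n : ℕ} (hn : 2 ≤ n) (u v : EuclideanSpace ℝ (Fin n))
    (hu : ‖u‖ = 1) (hv : ‖v‖ = 1) (huv : 0 ≤ ⟪u, v⟫)
    (α : ℝ) (hα₀ : 0 < α) (hα₁ : α ≤ 1) :
    ∃ w₀ : EuclideanSpace ℝ (Fin n), ‖w₀‖ = 1 ∧
      ∀ w : EuclideanSpace ℝ (Fin n), ‖w‖ = 1 → Real.arccos ⟪w, w₀⟫ ≤ α / 12 →
        (α / 3 ≤ Real.arccos ⟪u, w⟫ ∧ Real.arccos ⟪u, w⟫ ≤ α / 2) ∧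
        Real.sin (α / 3) ≤ ⟪w, v⟫ := by
  obtain ⟨e, he, hue, hve⟩ := exists_e hn u v hu hv huv
  have hπ : (3 : ℝ) < Real.pi := Real.pi_gt_three
  have huu : ⟪u, u⟫ = 1 := by rw [real_inner_self_eq_norm_sq, hu]; norm_num
  have hcs : |⟪u, v⟫| ≤ 1 := by
    have := abs_real_inner_le_norm u v
    rwa [hu, hv, one_mul] at this
  set θ := Real.arccos ⟪u, v⟫ with hθdef
  have hθ0 : 0 ≤ θ := Real.arccos_nonneg _
  have hθhalf : θ ≤ Real.pi / 2 := Real.arccos_le_pi_div_two.mpr huv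
  have hcosθ : Real.cos θ = ⟪u, v⟫ :=
    Real.cos_arccos (by linarith [neg_abs_le ⟪u, v⟫]) (by linarith [le_abs_self ⟪u, v⟫])
  have hsinθ : Real.sin θ = Real.sqrt (1 - ⟪u, v⟫ ^ 2) := Real.sin_arccos _
  set β := 5 * α / 12 with hβdef
  have hβ0 : 0 < β := by positivity
  have hβle : β ≤ 5 / 12 := by rw [hβdef]; linarith
  set w₀ : EuclideanSpace ℝ (Fin n) := Real.cos β • u + Real.sin β • e with hw₀def
  have huw₀ : ⟪u, w₀⟫ = Real.cos β := by
    rw [hw₀def, inner_add_right, real_inner_smul_right, real_inner_smul_right, huu, hue]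
    ring
  have hvw₀ : ⟪v, w₀⟫ = Real.cos (θ - β) := by
    rw [hw₀def, inner_add_right, real_inner_smul_right, real_inner_smul_right,
      real_inner_comm u v, hve, Real.cos_sub, hcosθ, hsinθ]
    ring
  have hw₀norm : ‖w₀‖ = 1 := by
    have hsq : ‖w₀‖ ^ 2 = 1 := by
      have hee : ⟪e, e⟫ = 1 := by rw [real_inner_self_eq_norm_sq, he]; norm_num
      have heu : ⟪e, u⟫ = 0 := by rw [real_inner_comm]; exact hue
      rw [← real_inner_self_eq_norm_sq, hw₀def]
      simp only [inner_add_left, inner_add_right, real_inner_smul_left,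
        real_inner_smul_right, huu, hue, hee, heu]
      have := Real.sin_sq_add_cos_sq β
      nlinarith
    rw [← Real.sqrt_sq (norm_nonneg w₀), hsq, Real.sqrt_one]
  refine ⟨w₀, hw₀norm, fun w hw hwγ => ?_⟩
  have hwcs : |⟪w, w₀⟫| ≤ 1 := by
    have := abs_real_inner_le_norm w w₀
    rwa [hw, hw₀norm, one_mul] at this
  set γ := Real.arccos ⟪w, w₀⟫ with hγdef
  have hγ0 : 0 ≤ γ := Real.arccos_nonneg _
  have hcosγ : Real.cos γ = ⟪w, w₀⟫ :=
    Real.cos_arccos (by linarith [neg_abs_le ⟪w, w₀⟫]) (by linarith [le_abs_self ⟪w, w₀⟫])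
  have hsinγ : Real.sin γ = Real.sqrt (1 - ⟪w, w₀⟫ ^ 2) := Real.sin_arccos _
  have hsinβ : Real.sin β = Real.sqrt (1 - Real.cos β ^ 2) := by
    rw [show 1 - Real.cos β ^ 2 = Real.sin β ^ 2 by rw [Real.sin_sq]]
    rw [Real.sqrt_sq (Real.sin_nonneg_of_nonneg_of_le_pi (le_of_lt hβ0) (by linarith))]
  -- part (a)
  have hkey1 := key_inner u w₀ w hu hw₀norm hw
  rw [huw₀, real_inner_comm w w₀, ← hsinβ, ← hsinγ, ← hcosγ] at hkey1
  rw [abs_le] at hkey1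
  obtain ⟨hk1l, hk1r⟩ := hkey1
  have hiw_lo : Real.cos (β + γ) ≤ ⟪u, w⟫ := by
    rw [Real.cos_add]; linarith
  have hiw_hi : ⟪u, w⟫ ≤ Real.cos (β - γ) := by
    rw [Real.cos_sub]; linarith
  have hγβ : γ ≤ β := by rw [hβdef]; linarith
  have parta1 : α / 3 ≤ Real.arccos ⟪u, w⟫ := by
    have h1 : Real.arccos (Real.cos (β - γ)) ≤ Real.arccos ⟪u, w⟫ :=
      arccos_le_arccos' hiw_hi
    rw [Real.arccos_cos (by linarith) (by linarith)] at h1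
    rw [hβdef] at h1
    linarith
  have parta2 : Real.arccos ⟪u, w⟫ ≤ α / 2 := by
    have h1 : Real.arccos ⟪u, w⟫ ≤ Real.arccos (Real.cos (β + γ)) :=
      arccos_le_arccos' hiw_lo
    rw [Real.arccos_cos (by linarith) (by linarith)] at h1
    rw [hβdef] at h1
    linarith
  -- part (b)
  have hkey2 := key_inner w w₀ v hw hw₀norm hv
  rw [← hsinγ, ← hcosγ] at hkey2
  have partb : Real.sin (α / 3) ≤ ⟪w, v⟫ := by
    have hgen : ∀ δ : ℝ, 0 ≤ δ → δ ≤ Real.pi → ⟪w₀, v⟫ = Real.cos δ →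
        γ + δ ≤ Real.pi / 2 - α / 3 → Real.sin (α / 3) ≤ ⟪w, v⟫ := by
      intro δ hδ0 hδπ hδeq hδsum
      have hsinδ : Real.sin δ = Real.sqrt (1 - Real.cos δ ^ 2) := by
        rw [show 1 - Real.cos δ ^ 2 = Real.sin δ ^ 2 by rw [Real.sin_sq]]
        rw [Real.sqrt_sq (Real.sin_nonneg_of_nonneg_of_le_pi hδ0 hδπ)]
      rw [hδeq, ← hsinδ, abs_le] at hkey2
      obtain ⟨hk2l, _⟩ := hkey2
      have h1 : Real.cos (γ + δ) ≤ ⟪w, v⟫ := by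
        rw [Real.cos_add]; linarith
      have h2 : Real.cos (Real.pi / 2 - α / 3) ≤ Real.cos (γ + δ) :=
        Real.cos_le_cos_of_nonneg_of_le_pi (by linarith) (by linarith) hδsum
      rw [Real.cos_pi_div_two_sub] at h2
      linarith
    rcases le_total β θ with hc | hc
    · exact hgen (θ - β) (by linarith) (by linarith)
        (by rw [real_inner_comm, hvw₀]) (by linarith)
    · refine hgen (β - θ) (by linarith) (by linarith) ?_ ?_
      · rw [real_inner_comm, hvw₀, show θ - β = -(β - θ) by ring, Real.cos_neg]
      · rw [hβdef]; linarith
  exact ⟨⟨parta1, parta2⟩, partb⟩
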